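/- arXiv:2211.15038 — 2 statements merged into one kernel-verified Lean document; each statement's English description precedes it below -/
import Mathlib

section
/- There exists β₀ > 1 such that for all β ≥ β₀ and all (t,x) ∈ (0,T) × G satisfying ∑_{i=1}^n e^{β(xᵢ-x₀ᵢ)²} - n·e^{αβ(t-T/2)²} > 0, one has min_{i=1,...,n}(xᵢ-x₀ᵢ)² - nα²(t-T/2)² ≥ c₀ > 0, where c₀ = ((1-κ²)/2)·min_{x ∈ cl(G), i}(xᵢ-x₀ᵢ)². -/
open Real Finset

/-- `min_i (xᵢ - x₀ᵢ)²` over coordinates. -/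
noncomputable def minSq (n : ℕ) (x₀ x : Fin (n+1) → ℝ) : ℝ :=
  Finset.univ.inf' Finset.univ_nonempty (fun i => (x i - x₀ i)^2)

/-- `max_i (xᵢ - x₀ᵢ)²` over coordinates. -/
noncomputable def maxSq (n : ℕ) (x₀ x : Fin (n+1) → ℝ) : ℝ :=
  Finset.univ.sup' Finset.univ_nonempty (fun i => (x i - x₀ i)^2)

set_option maxHeartbeats 1000000 in
/-- Assertion (2) of Lemma 4.1: there is `β₀ > 1` such that for all `β ≥ β₀`, on the region
where `∑ e^{β(xᵢ-x₀ᵢ)²} - n e^{αβ(t-T/2)²} > 0` one has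
`min_i (xᵢ-x₀ᵢ)² - nα²(t-T/2)² ≥ c₀ > 0`, with
`c₀ = ((1-κ²)/2)·min_{x ∈ cl G, i} (xᵢ-x₀ᵢ)²`. Dimension `n ≥ 1` is encoded as `n+1`. -/
theorem stmt_4 (n : ℕ) (x₀ : Fin (n+1) → ℝ) (G : Set (Fin (n+1) → ℝ))
    (hG : Bornology.IsBounded G) (hGne : G.Nonempty)
    (hsep : ∃ c > 0, ∀ x ∈ closure G, ∀ i, c ≤ |x i - x₀ i|)
    (R₁ Tstar α T κ c₀ : ℝ)
    (hR₁ : R₁ = sSup {r : ℝ | ∃ x ∈ closure G, ∃ i, r = |x i - x₀ i|})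
    (hTstar : Tstar = 2 * Real.sqrt ((n : ℝ)+1) * R₁ *
      sSup {r : ℝ | ∃ x ∈ closure G, r = Real.sqrt (maxSq n x₀ x / minSq n x₀ x)})
    (hα : α = (κ^2/((n : ℝ)+1)) *
      sInf {r : ℝ | ∃ x ∈ closure G, r = minSq n x₀ x / maxSq n x₀ x})
    (hc₀ : c₀ = ((1 - κ^2)/2) * sInf {r : ℝ | ∃ x ∈ closure G, ∃ i, r = (x i - x₀ i)^2})
    (hκ : 0 < κ) (hκ1 : κ < 1) (hT : Tstar < T) (hκT : Tstar < κ * T) :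
    0 < c₀ ∧ ∃ β₀ > (1 : ℝ), ∀ β ≥ β₀, ∀ t ∈ Set.Ioo (0 : ℝ) T, ∀ x ∈ G,
      (∑ i, Real.exp (β * (x i - x₀ i)^2)) - ((n : ℝ)+1) * Real.exp (α*β*(t - T/2)^2) > 0 →
      minSq n x₀ x - ((n : ℝ)+1) * α^2 * (t - T/2)^2 ≥ c₀ := by
  obtain ⟨c, hcpos, hc⟩ := hsep
  obtain ⟨y₀, hy₀⟩ := hGne
  have hy₀c : y₀ ∈ closure G := subset_closure hy₀
  set Sset := {r : ℝ | ∃ x ∈ closure G, ∃ i, r = (x i - x₀ i)^2} with hSset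
  have hSbdd : BddBelow Sset := ⟨0, by rintro r ⟨x, hx, i, rfl⟩; positivity⟩
  have hSne : Sset.Nonempty := ⟨(y₀ 0 - x₀ 0)^2, y₀, hy₀c, 0, rfl⟩
  set S := sInf Sset with hS
  have hSc : c^2 ≤ S := by
    refine le_csInf hSne ?_
    rintro r ⟨x, hx, i, rfl⟩
    have h1 := hc x hx i
    nlinarith [abs_nonneg (x i - x₀ i), sq_abs (x i - x₀ i)]
  have hSpos : (0:ℝ) < S := lt_of_lt_of_le (by positivity) hSc
  have hκ2 : (0:ℝ) < 1 - κ^2 := by nlinarith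
  have hc₀pos : 0 < c₀ := by rw [hc₀]; positivity
  set Qset := {r : ℝ | ∃ x ∈ closure G, r = minSq n x₀ x / maxSq n x₀ x} with hQset
  have hminSq_nonneg : ∀ x : Fin (n+1) → ℝ, 0 ≤ minSq n x₀ x := by
    intro x
    exact Finset.le_inf' _ _ (fun i _ => by positivity)
  have hmaxSq_pos : ∀ x ∈ closure G, 0 < maxSq n x₀ x := by
    intro x hx
    have h1 := hc x hx 0
    have h2 : (x 0 - x₀ 0)^2 ≤ maxSq n x₀ x :=
      Finset.le_sup' (fun i => (x i - x₀ i)^2) (Finset.mem_univ 0)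
    nlinarith [sq_abs (x 0 - x₀ 0), abs_nonneg (x 0 - x₀ 0)]
  have hQbdd : BddBelow Qset := by
    refine ⟨0, ?_⟩
    rintro r ⟨x, hx, rfl⟩
    exact div_nonneg (hminSq_nonneg x) (le_of_lt (hmaxSq_pos x hx))
  have hQne : Qset.Nonempty := ⟨_, y₀, hy₀c, rfl⟩
  have hαnn : 0 ≤ α := by
    rw [hα]
    have : 0 ≤ sInf Qset := le_csInf hQne (by
      rintro r ⟨x, hx, rfl⟩
      exact div_nonneg (hminSq_nonneg x) (le_of_lt (hmaxSq_pos x hx)))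
    positivity
  refine ⟨hc₀pos, 2, by norm_num, ?_⟩
  intro β hβ t ht x hx hpos
  have hxc : x ∈ closure G := subset_closure hx
  have hβpos : (0:ℝ) < β := by linarith
  -- sum bound
  have hmaxb : ∀ i : Fin (n+1), (x i - x₀ i)^2 ≤ maxSq n x₀ x :=
    fun i => Finset.le_sup' (fun j => (x j - x₀ j)^2) (Finset.mem_univ i)
  have hsum : (∑ i, Real.exp (β * (x i - x₀ i)^2)) ≤ ((n:ℝ)+1) * Real.exp (β * maxSq n x₀ x) := by
    calc (∑ i, Real.exp (β * (x i - x₀ i)^2))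
        ≤ ∑ _i : Fin (n+1), Real.exp (β * maxSq n x₀ x) := by
          refine Finset.sum_le_sum (fun i _ => ?_)
          exact Real.exp_le_exp.mpr (mul_le_mul_of_nonneg_left (hmaxb i) (le_of_lt hβpos))
      _ = ((n:ℝ)+1) * Real.exp (β * maxSq n x₀ x) := by
          simp [Finset.sum_const, Finset.card_univ, nsmul_eq_mul]
  have hexp : Real.exp (α*β*(t - T/2)^2) < Real.exp (β * maxSq n x₀ x) := by
    have h1 : ((n:ℝ)+1) * Real.exp (α*β*(t - T/2)^2) < ((n:ℝ)+1) * Real.exp (β * maxSq n x₀ x) := by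
      linarith
    have hn : (0:ℝ) < (n:ℝ)+1 := by positivity
    exact lt_of_mul_lt_mul_left h1 (le_of_lt hn)
  have hlt : α * (t - T/2)^2 < maxSq n x₀ x := by
    have := Real.exp_lt_exp.mp hexp
    have h2 : β * (α * (t - T/2)^2) < β * maxSq n x₀ x := by nlinarith
    exact lt_of_mul_lt_mul_left h2 (le_of_lt hβpos)
  -- α * maxSq ≤ (κ²/(n+1)) * minSq
  have hQle : sInf Qset ≤ minSq n x₀ x / maxSq n x₀ x := csInf_le hQbdd ⟨x, hxc, rfl⟩
  have hkey : α * maxSq n x₀ x ≤ (κ^2/((n:ℝ)+1)) * minSq n x₀ x := by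
    have hmp := hmaxSq_pos x hxc
    have h1 : α ≤ (κ^2/((n:ℝ)+1)) * (minSq n x₀ x / maxSq n x₀ x) := by
      rw [hα]
      have hk : (0:ℝ) ≤ κ^2/((n:ℝ)+1) := by positivity
      exact mul_le_mul_of_nonneg_left hQle hk
    have h2 : α * maxSq n x₀ x ≤ (κ^2/((n:ℝ)+1)) * (minSq n x₀ x / maxSq n x₀ x) * maxSq n x₀ x :=
      mul_le_mul_of_nonneg_right h1 (le_of_lt hmp)
    calc α * maxSq n x₀ x ≤ _ := h2
      _ = (κ^2/((n:ℝ)+1)) * minSq n x₀ x := by field_simp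
  -- S ≤ minSq x
  have hSmin : S ≤ minSq n x₀ x := by
    obtain ⟨i₀, _, hi₀⟩ := Finset.exists_mem_eq_inf' Finset.univ_nonempty
      (fun i => (x i - x₀ i)^2)
    rw [minSq, hi₀]
    exact csInf_le hSbdd ⟨x, hxc, i₀, rfl⟩
  -- assemble
  have h2 : α^2 * (t - T/2)^2 ≤ α * maxSq n x₀ x := by
    have := mul_le_mul_of_nonneg_left (le_of_lt hlt) hαnn
    calc α^2 * (t - T/2)^2 = α * (α * (t - T/2)^2) := by ring
      _ ≤ α * maxSq n x₀ x := this
  have hfin : ((n:ℝ)+1) * α^2 * (t - T/2)^2 ≤ κ^2 * minSq n x₀ x := by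
    have hn : (0:ℝ) < (n:ℝ)+1 := by positivity
    have h3 : ((n:ℝ)+1) * (α^2 * (t - T/2)^2) ≤ ((n:ℝ)+1) * (α * maxSq n x₀ x) :=
      mul_le_mul_of_nonneg_left h2 (le_of_lt hn)
    have h4 : ((n:ℝ)+1) * ((κ^2/((n:ℝ)+1)) * minSq n x₀ x) = κ^2 * minSq n x₀ x := by
      field_simp
    have h5 := mul_le_mul_of_nonneg_left hkey (le_of_lt hn)
    linarith only [h3, h4, h5]
  rw [hc₀]
  have hP : 0 ≤ (1 - κ^2) * (minSq n x₀ x - S) :=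
    mul_nonneg (le_of_lt hκ2) (sub_nonneg.mpr hSmin)
  have hQ : 0 < (1 - κ^2) * S := mul_pos hκ2 hSpos
  linarith only [hfin, hP, hQ]
end

section
/- Suppose (t,x) satisfies ∑_{i=1}^n e^{β(xᵢ-x₀ᵢ)²} > n·e^{αβ(t-T/2)²} and min_i(xᵢ-x₀ᵢ)² - nα²(t-T/2)² ≥ c₀ > 0. Then ∑_{i=1}^n e^{2β(xᵢ-x₀ᵢ)²}·(xᵢ-x₀ᵢ)² - α²n²·e^{2αβ(t-T/2)²}·(t-T/2)² ≥ (c₀c₁/√n)·[(∑_{i=1}^n e^{2β(xᵢ-x₀ᵢ)²})^{1/2} + √n·e^{αβ(t-T/2)²}], provided additionally ∑_{i=1}^n e^{β(xᵢ-x₀ᵢ)²} - n·e^{αβ(t-T/2)²} > c₁ > 0. -/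
open Real Finset

/-- The key estimate (zd1) in the Carleman estimate. Dimension `n ≥ 1` encoded as `n+1`. -/
theorem stmt_6 (n : ℕ) (β α T c₀ c₁ : ℝ) (x₀ x : Fin (n+1) → ℝ) (t : ℝ)
    (hβ : 0 < β) (hα : 0 < α) (hα1 : α < 1) (hT : 0 < T) (hc₀ : 0 < c₀) (hc₁ : 0 < c₁)
    (h1 : ∑ i, Real.exp (β * (x i - x₀ i)^2) > ((n : ℝ)+1) * Real.exp (α*β*(t - T/2)^2))
    (h2 : (Finset.univ.inf' Finset.univ_nonempty (fun i => (x i - x₀ i)^2))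
            - ((n : ℝ)+1) * α^2 * (t - T/2)^2 ≥ c₀)
    (h3 : (∑ i, Real.exp (β * (x i - x₀ i)^2))
            - ((n : ℝ)+1) * Real.exp (α*β*(t - T/2)^2) > c₁) :
    (∑ i, Real.exp (2*β*(x i - x₀ i)^2) * (x i - x₀ i)^2)
      - α^2 * ((n : ℝ)+1)^2 * Real.exp (2*α*β*(t - T/2)^2) * (t - T/2)^2
    ≥ (c₀ * c₁ / Real.sqrt ((n : ℝ)+1)) *
        (Real.sqrt (∑ i, Real.exp (2*β*(x i - x₀ i)^2))
          + Real.sqrt ((n : ℝ)+1) * Real.exp (α*β*(t - T/2)^2)) := by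
  set s : ℝ := t - T/2 with hs
  set N : ℝ := (n : ℝ) + 1 with hN
  have hNpos : (0:ℝ) < N := by positivity
  set a : Fin (n+1) → ℝ := fun i => Real.exp (β * (x i - x₀ i)^2) with ha
  set b : ℝ := Real.exp (α*β*s^2) with hb
  have hbpos : 0 < b := Real.exp_pos _
  have hapos : ∀ i, 0 < a i := fun i => Real.exp_pos _
  -- exp rewrites
  have hexp : ∀ i, Real.exp (2*β*(x i - x₀ i)^2) = (a i)^2 := by
    intro i
    have h : 2*β*(x i - x₀ i)^2 = β*(x i - x₀ i)^2 + β*(x i - x₀ i)^2 := by ring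
    rw [h, Real.exp_add, ha]
    ring
  have hexpb : Real.exp (2*α*β*s^2) = b^2 := by
    have h : 2*α*β*s^2 = α*β*s^2 + α*β*s^2 := by ring
    rw [h, Real.exp_add, hb]
    ring
  set S2 : ℝ := ∑ i, (a i)^2 with hS2
  have hS2pos : 0 < S2 := Finset.sum_pos (fun i _ => pow_pos (hapos i) 2) Finset.univ_nonempty
  set S : ℝ := Real.sqrt S2 with hSdef
  have hSpos : 0 < S := Real.sqrt_pos.mpr hS2pos
  have hSsq : S^2 = S2 := Real.sq_sqrt hS2pos.le
  set A : ℝ := ∑ i, a i with hA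
  have hApos : 0 < A := Finset.sum_pos (fun i _ => hapos i) Finset.univ_nonempty
  clear_value s N a b S2 S A
  -- Cauchy–Schwarz : A^2 ≤ N * S2
  have hCS : A^2 ≤ N * S2 := by
    have := sq_sum_le_card_mul_sum_sq (s := (Finset.univ : Finset (Fin (n+1)))) (f := a)
    simpa [hA, hS2, hN, Finset.card_univ] using this
  -- each (x i - x₀ i)^2 ≥ c₀ + N*α^2*s^2
  have hy : ∀ i, (x i - x₀ i)^2 ≥ c₀ + N*α^2*s^2 := by
    intro i
    have hinf : (Finset.univ.inf' Finset.univ_nonempty (fun i => (x i - x₀ i)^2))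
        ≤ (x i - x₀ i)^2 := Finset.inf'_le _ (Finset.mem_univ i)
    linarith [h2, hinf]
  -- main lower bound on the sum
  have hstep : (∑ i, Real.exp (2*β*(x i - x₀ i)^2) * (x i - x₀ i)^2)
      ≥ (c₀ + N*α^2*s^2) * S2 := by
    rw [hS2, Finset.mul_sum]
    apply Finset.sum_le_sum
    intro i _
    rw [hexp i]
    have := mul_le_mul_of_nonneg_left (hy i) (sq_nonneg (a i))
    linarith
  -- √N * S ≥ A
  have hsNpos : 0 < Real.sqrt N := Real.sqrt_pos.mpr hNpos
  have hsNsq : (Real.sqrt N)^2 = N := Real.sq_sqrt hNpos.le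
  have hSA : A ≤ Real.sqrt N * S := by
    have h := Real.sqrt_le_sqrt hCS
    rw [Real.sqrt_sq hApos.le, Real.sqrt_mul hNpos.le, ← hSdef] at h
    exact h
  have hAb : A > N * b := h1
  have hAbc : A - N * b > c₁ := h3
  -- N*S2 ≥ N^2*b^2
  have hsq : (N*b)*(N*b) ≤ A*A :=
    mul_self_le_mul_self (mul_pos hNpos hbpos).le hAb.le
  have h3' : N * S2 - N^2 * b^2 ≥ 0 := by nlinarith [hsq, hCS]
  -- (kept nlinarith; small)
  have hLHS : (∑ i, Real.exp (2*β*(x i - x₀ i)^2) * (x i - x₀ i)^2)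
      - α^2 * N^2 * Real.exp (2*α*β*s^2) * s^2 ≥ c₀ * S2 := by
    rw [hexpb]
    have hpr : 0 ≤ α^2*s^2 * (N*S2 - N^2*b^2) :=
      mul_nonneg (by positivity) h3'
    linarith [hstep, hpr]
  -- bound c₀ * S2 ≥ RHS
  have hkey : c₀ * S2 ≥ (c₀ * c₁ / Real.sqrt N) * (S + Real.sqrt N * b) := by
    have h6 : c₁ + N * b ≤ Real.sqrt N * S := by linarith [hSA, hAbc]
    have h6' : c₁ ≤ Real.sqrt N * S := by
      have := mul_pos hNpos hbpos; linarith
    have p1 : (c₁ + N*b) * S ≤ (Real.sqrt N * S) * S :=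
      mul_le_mul_of_nonneg_right h6 hSpos.le
    have p2 : (Real.sqrt N * b) * c₁ ≤ (Real.sqrt N * b) * (Real.sqrt N * S) :=
      mul_le_mul_of_nonneg_left h6' (by positivity)
    have e : Real.sqrt N * (S * S) = Real.sqrt N * S2 := by rw [← hSsq]; ring
    have e2 : (Real.sqrt N * b) * (Real.sqrt N * S) = N * (b * S) := by
      rw [show (Real.sqrt N * b) * (Real.sqrt N * S) = (Real.sqrt N)^2*(b*S) by ring,
        hsNsq]
    have hmain : Real.sqrt N * S2 ≥ c₁ * S + Real.sqrt N * (c₁ * b) := by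
      linarith [p1, p2, e, e2]
    have hm2 : c₀ * (c₁ * S + Real.sqrt N * (c₁ * b)) ≤ c₀ * (Real.sqrt N * S2) :=
      mul_le_mul_of_nonneg_left hmain hc₀.le
    rw [ge_iff_le, div_mul_eq_mul_div, div_le_iff₀ hsNpos]
    linarith [hm2]
    
  have hrw : Real.sqrt (∑ i, Real.exp (2*β*(x i - x₀ i)^2)) = S := by
    rw [hSdef, hS2]
    congr 1
    exact Finset.sum_congr rfl (fun i _ => hexp i)
  rw [hrw]
  calc (∑ i, Real.exp (2*β*(x i - x₀ i)^2) * (x i - x₀ i)^2)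
      - α^2 * N^2 * Real.exp (2*α*β*s^2) * s^2
      ≥ c₀ * S2 := hLHS
    _ ≥ (c₀ * c₁ / Real.sqrt N) * (S + Real.sqrt N * b) := hkey
end
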